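/- Let n ≥ 1 with n ≡ 1 (mod 4), let Θ̂ be a real number with (n−2)·π/2 < Θ̂ < n·π/2, and let μ₁, …, μ_{n−1} be real numbers with Σ_{k=1}^{n−1} arctan(μ_k) > Θ̂ − π/2. Then the complex number z := ∏_{k=1}^{n−1} (1 + i·μ_k) satisfies tan(Θ̂)·Im(z) + Re(z) > 0. -/

import Mathlib

open Real

lemma factor_eq (x : ℝ) :
    (1 + Complex.I * (x : ℂ)) =
      (Real.sqrt (1 + x ^ 2) : ℂ) * Complex.exp ((Real.arctan x : ℂ) * Complex.I) := by
  have hs : Real.sqrt (1 + x ^ 2) ≠ 0 := by positivity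
  rw [Complex.exp_mul_I, ← Complex.ofReal_cos, ← Complex.ofReal_sin,
    Real.cos_arctan, Real.sin_arctan]
  apply Complex.ext <;>
    simp only [Complex.add_re, Complex.add_im, Complex.mul_re, Complex.mul_im,
      Complex.ofReal_re, Complex.ofReal_im, Complex.I_re, Complex.I_im, Complex.one_re,
      Complex.one_im] <;>
    field_simp <;>
    ring

lemma prod_eq (N : ℕ) (μ : Fin N → ℝ) :
    ∏ k, (1 + Complex.I * (μ k : ℂ)) =
      ((∏ k, Real.sqrt (1 + μ k ^ 2) : ℝ) : ℂ) *
        Complex.exp (((∑ k, Real.arctan (μ k) : ℝ) : ℂ) * Complex.I) := by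
  simp_rw [factor_eq, Finset.prod_mul_distrib]
  rw [← Complex.exp_sum]
  push_cast
  rw [Finset.sum_mul]

/-- Case `n ≡ 1 (mod 4)` of Proposition 8.1: if
`Σ_{k=1}^{n-1} arctan μ_k > Θ̂ - π/2` with `Θ̂ ∈ ((n-2)π/2, nπ/2)`, then
`z = ∏ (1 + i μ_k)` satisfies `tan(Θ̂) Im z + Re z > 0`. -/
theorem stmt_14 (n : ℕ) (hn : 1 ≤ n) (hmod : n % 4 = 1) (Θhat : ℝ)
    (h1 : ((n : ℝ) - 2) * (π / 2) < Θhat) (h2 : Θhat < (n : ℝ) * (π / 2))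
    (μ : Fin (n - 1) → ℝ)
    (hμ : Θhat - π / 2 < ∑ k, Real.arctan (μ k)) :
    0 < Real.tan Θhat * (∏ k, (1 + Complex.I * (μ k : ℂ))).im +
        (∏ k, (1 + Complex.I * (μ k : ℂ))).re := by
  set S : ℝ := ∑ k, Real.arctan (μ k) with hS
  set R : ℝ := ∏ k, Real.sqrt (1 + μ k ^ 2) with hR
  have hRpos : 0 < R := Finset.prod_pos (fun k _ => by positivity)
  have hprod := prod_eq (n - 1) μ
  have hre : (∏ k, (1 + Complex.I * (μ k : ℂ))).re = R * Real.cos S := by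
    rw [hprod, Complex.exp_mul_I, ← Complex.ofReal_cos, ← Complex.ofReal_sin]
    simp only [Complex.add_re, Complex.add_im, Complex.mul_re, Complex.mul_im,
      Complex.ofReal_re, Complex.ofReal_im, Complex.I_re, Complex.I_im]
    ring
  have him : (∏ k, (1 + Complex.I * (μ k : ℂ))).im = R * Real.sin S := by
    rw [hprod, Complex.exp_mul_I, ← Complex.ofReal_cos, ← Complex.ofReal_sin]
    simp only [Complex.add_re, Complex.add_im, Complex.mul_re, Complex.mul_im,
      Complex.ofReal_re, Complex.ofReal_im, Complex.I_re, Complex.I_im]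
    ring
  -- bound on S from above
  have hπ := Real.pi_pos
  have hSub : S ≤ ((n : ℝ) - 1) * (π / 2) := by
    have := Finset.sum_le_sum (s := (Finset.univ : Finset (Fin (n-1))))
      (f := fun k : Fin (n-1) => Real.arctan (μ k))
      (g := fun _ => π / 2) (fun k _ => (Real.arctan_lt_pi_div_two (μ k)).le)
    simp only [Finset.sum_const, Finset.card_univ, Fintype.card_fin, nsmul_eq_mul] at this
    have hcast : ((n - 1 : ℕ) : ℝ) = (n : ℝ) - 1 := by
      have : (1:ℕ) ≤ n := hn
      push_cast [Nat.cast_sub this]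
      ring
    rw [hcast] at this
    exact this
  -- Θhat - S ∈ (-π/2, π/2)
  have hΘS : Real.cos (Θhat - S) > 0 := by
    apply Real.cos_pos_of_mem_Ioo
    constructor
    · linarith
    · linarith
  -- cos Θhat > 0
  have hcosΘ : 0 < Real.cos Θhat := by
    obtain ⟨m, hm⟩ : ∃ m : ℕ, n = 4 * m + 1 := ⟨n / 4, by omega⟩
    have hΘ : Θhat = (Θhat - (m : ℝ) * (2 * π)) + (m : ℤ) * (2 * π) := by push_cast; ring
    rw [hΘ, Real.cos_add_int_mul_two_pi]
    apply Real.cos_pos_of_mem_Ioo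
    have hn' : ((n : ℝ)) = 4 * (m : ℝ) + 1 := by rw [hm]; push_cast; ring
    rw [hn'] at h1 h2
    constructor
    · have : ((4 * (m:ℝ) + 1) - 2) * (π / 2) = (m : ℝ) * (2 * π) - π / 2 := by ring
      linarith
    · have : (4 * (m:ℝ) + 1) * (π / 2) = (m : ℝ) * (2 * π) + π / 2 := by ring
      linarith
  rw [hre, him, Real.tan_eq_sin_div_cos]
  rw [Real.cos_sub] at hΘS
  have key : Real.sin Θhat / Real.cos Θhat * (R * Real.sin S) + R * Real.cos S =
      R * ((Real.cos Θhat * Real.cos S + Real.sin Θhat * Real.sin S) / Real.cos Θhat) := by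
    field_simp
    ring
  rw [key]
  exact mul_pos hRpos (div_pos hΘS hcosΘ)
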